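/- Let k have characteristic 3, P = C₃ × C₃ with generators r, s, and H = P ⋊ ⟨t⟩ where t has order 2 and acts on P by inversion. Then the relative trace Tr₁^H(c) = Σ_{g∈H} g c g⁻¹ vanishes on kP, and for a ∈ P one has Tr₁^H(at) = 2·Σ_{x∈P} xt. Consequently the projective ideal Z^pr(kH) = Tr₁^H(kH) is one-dimensional with basis {Σ_{x∈P} xt}. -/

import Mathlib

/-! The Frobenius group `H = P ⋊ C₂`, where `P = C₃ × C₃` and the nontrivial element `t`
of `C₂` acts on `P` by inversion. -/

/-- `P = C₃ × C₃`, written multiplicatively. -/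
abbrev Pgrp := Multiplicative (ZMod 3 × ZMod 3)

lemma c2_cases (a : Multiplicative (ZMod 2)) :
    a = 1 ∨ a = Multiplicative.ofAdd 1 := by revert a; decide

lemma invAut_sq : (MulEquiv.inv Pgrp) * (MulEquiv.inv Pgrp) = (1 : MulAut Pgrp) := by
  ext x
  simp
  all_goals simp [MulAut.mul_apply]

/-- The action of `C₂` on `P` by inversion. -/
def invAction : Multiplicative (ZMod 2) →* MulAut Pgrp where
  toFun a := if a = 1 then 1 else MulEquiv.inv Pgrp
  map_one' := if_pos rfl
  map_mul' a b := by
    have h2 : (Multiplicative.ofAdd (1 : ZMod 2)) ≠ 1 := by decide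
    have h1 : (Multiplicative.ofAdd (1 : ZMod 2)) * Multiplicative.ofAdd 1 = 1 := by decide
    rcases c2_cases a with ha | ha <;> rcases c2_cases b with hb | hb <;>
        subst ha <;> subst hb <;>
      simp only [one_mul, mul_one, h1, if_pos rfl, if_neg h2]
    all_goals first | rfl | exact invAut_sq.symm

/-- The Frobenius group `H = P ⋊ C₂` of order 18. -/
abbrev Hgrp := SemidirectProduct Pgrp (Multiplicative (ZMod 2)) invAction

noncomputable instance : Fintype Hgrp :=
  Fintype.ofEquiv (Pgrp × Multiplicative (ZMod 2))
    { toFun := fun p => ⟨p.1, p.2⟩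
      invFun := fun h => (h.left, h.right)
      left_inv := fun _ => rfl
      right_inv := fun _ => rfl }

/-- The nontrivial element `t` of the complement `C₂` in `H`, acting by inversion. -/
def tH : Hgrp := SemidirectProduct.inr (Multiplicative.ofAdd 1)

/-- A generator `r` of the first factor `C₃` of `P`. -/
def rP : Pgrp := Multiplicative.ofAdd ((1 : ZMod 3), (0 : ZMod 3))

/-- A generator `s` of the second factor `C₃` of `P`. -/
def sP : Pgrp := Multiplicative.ofAdd ((0 : ZMod 3), (1 : ZMod 3))

variable (k : Type*) [Field k]

/-- The embedding `kP → kH` of group algebras induced by `P ≤ H`. -/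
noncomputable def embedP : MonoidAlgebra k Pgrp →ₐ[k] MonoidAlgebra k Hgrp :=
  MonoidAlgebra.lift k _ Pgrp ((MonoidAlgebra.of k Hgrp).comp SemidirectProduct.inl)

/-- The relative trace map `Tr₁^H(c) = Σ_{g ∈ H} g c g⁻¹` on the group algebra `kH`. -/
noncomputable def trH (c : MonoidAlgebra k Hgrp) : MonoidAlgebra k Hgrp :=
  ∑ g : Hgrp, MonoidAlgebra.of k Hgrp g * c * MonoidAlgebra.of k Hgrp g⁻¹

/-- The element `Σ_{x ∈ P} xt` of `kH`. -/
noncomputable def sigmaPt : MonoidAlgebra k Hgrp :=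
  ∑ x : Pgrp, MonoidAlgebra.of k Hgrp (SemidirectProduct.inl x * tH)


/-! ### Auxiliary lemmas -/

open SemidirectProduct

def eHP : Pgrp × Multiplicative (ZMod 2) ≃ Hgrp where
  toFun p := ⟨p.1, p.2⟩
  invFun h := (h.left, h.right)
  left_inv _ := rfl
  right_inv _ := rfl

lemma conj_inl (x : Pgrp) (b : Multiplicative (ZMod 2)) (a : Pgrp) :
    (⟨x,b⟩ : Hgrp) * SemidirectProduct.inl a * (⟨x,b⟩ : Hgrp)⁻¹
      = SemidirectProduct.inl (invAction b a) := by
  revert x b a; decide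

lemma conj_inl_t (x : Pgrp) (b : Multiplicative (ZMod 2)) (a : Pgrp) :
    (⟨x,b⟩ : Hgrp) * (SemidirectProduct.inl a * tH) * (⟨x,b⟩ : Hgrp)⁻¹
      = SemidirectProduct.inl (x * x * invAction b a) * tH := by
  revert x b a; decide

lemma sq_eq_inv (x : Pgrp) : x * x = x⁻¹ := by revert x; decide

lemma c2_sum {M : Type*} [AddCommMonoid M] (G : Multiplicative (ZMod 2) → M) :
    ∑ b, G b = G 1 + G (Multiplicative.ofAdd 1) := by
  have h : (Finset.univ : Finset (Multiplicative (ZMod 2)))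
      = {1, Multiplicative.ofAdd 1} := by decide
  rw [h, Finset.sum_insert (by decide), Finset.sum_singleton]

lemma trH_zero : trH k 0 = 0 := by simp [trH]

lemma trH_add (x y : MonoidAlgebra k Hgrp) : trH k (x + y) = trH k x + trH k y := by
  simp [trH, mul_add, add_mul, Finset.sum_add_distrib]

lemma trH_single (h : Hgrp) (v : k) :
    trH k (MonoidAlgebra.single h v) = ∑ g : Hgrp, MonoidAlgebra.single (g * h * g⁻¹) v := by
  unfold trH
  refine Finset.sum_congr rfl fun g _ => ?_
  simp [MonoidAlgebra.of_apply, MonoidAlgebra.single_mul_single]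

lemma trH_sum_prod (h : Hgrp) (v : k) :
    trH k (MonoidAlgebra.single h v) =
      ∑ p : Pgrp × Multiplicative (ZMod 2),
        MonoidAlgebra.single ((⟨p.1, p.2⟩ : Hgrp) * h * (⟨p.1, p.2⟩ : Hgrp)⁻¹) v := by
  rw [trH_single]
  exact (Fintype.sum_equiv eHP _ _ fun p => rfl).symm

lemma nine_zero [CharP k 3] : (9 : k) = 0 := by
  have h3 : (3 : k) = 0 := CharP.cast_eq_zero k 3
  linear_combination 3 * h3

lemma trH_inl [CharP k 3] (a : Pgrp) (v : k) :
    trH k (MonoidAlgebra.single (SemidirectProduct.inl a) v) = 0 := by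
  rw [trH_sum_prod, Fintype.sum_prod_type]
  have : ∀ x : Pgrp, ∑ b : Multiplicative (ZMod 2),
      MonoidAlgebra.single ((⟨x, b⟩ : Hgrp) * SemidirectProduct.inl a * (⟨x, b⟩ : Hgrp)⁻¹) v
      = ∑ b : Multiplicative (ZMod 2),
        (MonoidAlgebra.single (SemidirectProduct.inl (invAction b a)) v :
          MonoidAlgebra k Hgrp) := by
    intro x
    refine Finset.sum_congr rfl fun b _ => ?_
    rw [conj_inl]
  simp only [this]
  rw [Finset.sum_const, Finset.card_univ]
  have hc : Fintype.card Pgrp = 9 := by decide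
  rw [hc, ← Nat.cast_smul_eq_nsmul k]
  have h9 : ((9 : ℕ) : k) = 0 := by exact_mod_cast nine_zero k
  rw [h9, zero_smul]

lemma reindex_sq (c : Pgrp) (f : Pgrp → MonoidAlgebra k Hgrp) :
    ∑ x : Pgrp, f (x * x * c) = ∑ y : Pgrp, f y := by
  refine Fintype.sum_equiv ((Equiv.inv Pgrp).trans (Equiv.mulRight c)) _ _ fun x => ?_
  simp [sq_eq_inv x]

lemma trH_inl_t [CharP k 3] (a : Pgrp) (v : k) :
    trH k (MonoidAlgebra.single (SemidirectProduct.inl a * tH) v) =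
      (∑ y : Pgrp, MonoidAlgebra.single (SemidirectProduct.inl y * tH) v)
        + ∑ y : Pgrp, MonoidAlgebra.single (SemidirectProduct.inl y * tH) v := by
  rw [trH_sum_prod, Fintype.sum_prod_type_right]
  have : ∀ b : Multiplicative (ZMod 2), ∑ x : Pgrp,
      MonoidAlgebra.single
        ((⟨x, b⟩ : Hgrp) * (SemidirectProduct.inl a * tH) * (⟨x, b⟩ : Hgrp)⁻¹) v
      = ∑ y : Pgrp,
        (MonoidAlgebra.single (SemidirectProduct.inl y * tH) v : MonoidAlgebra k Hgrp) := by
    intro b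
    rw [show (∑ x : Pgrp, (MonoidAlgebra.single
          ((⟨x, b⟩ : Hgrp) * (SemidirectProduct.inl a * tH) * (⟨x, b⟩ : Hgrp)⁻¹) v :
          MonoidAlgebra k Hgrp))
        = ∑ x : Pgrp,
          MonoidAlgebra.single (SemidirectProduct.inl (x * x * invAction b a) * tH) v
      from Finset.sum_congr rfl fun x _ => by rw [conj_inl_t]]
    exact reindex_sq k (invAction b a)
      (fun y => MonoidAlgebra.single (SemidirectProduct.inl y * tH) v)
  simp only [this]
  rw [c2_sum]

lemma sigma_v (v : k) :
    ∑ y : Pgrp, MonoidAlgebra.single (SemidirectProduct.inl y * tH) v = v • sigmaPt k := by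
  unfold sigmaPt
  rw [Finset.smul_sum]
  refine Finset.sum_congr rfl fun y _ => ?_
  simp [MonoidAlgebra.of_apply, MonoidAlgebra.smul_single']

lemma embedP_single (a : Pgrp) (b : k) :
    embedP k (MonoidAlgebra.single a b) = MonoidAlgebra.single (SemidirectProduct.inl a) b := by
  unfold embedP
  rw [MonoidAlgebra.lift_single]
  simp [MonoidAlgebra.of_apply, MonoidAlgebra.smul_single']

lemma four_one [CharP k 3] : (4 : k) = 1 := by
  have h3 : (3 : k) = 0 := CharP.cast_eq_zero k 3
  linear_combination h3

lemma inlt_eq_tH (y : Pgrp) : (SemidirectProduct.inl y * tH : Hgrp) = tH ↔ y = 1 := by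
  revert y; decide

lemma sigmaPt_coeff : (sigmaPt k).coeff tH = 1 := by
  unfold sigmaPt
  rw [MonoidAlgebra.coeff_sum, Finset.sum_apply']
  simp only [MonoidAlgebra.of_apply, MonoidAlgebra.coeff_single, Finsupp.single_apply, inlt_eq_tH]
  simp

/-- Let `k` have characteristic `3`. The relative trace `Tr₁^H` vanishes on `kP`; for
`a ∈ P` one has `Tr₁^H(at) = 2·Σ_{x∈P} xt`; and consequently the projective ideal
`Z^pr(kH) = Tr₁^H(kH)` is one-dimensional with basis `{Σ_{x∈P} xt}`. -/
theorem stmt_13 [CharP k 3] :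
    (∀ c : MonoidAlgebra k Pgrp, trH k (embedP k c) = 0) ∧
    (∀ a : Pgrp,
      trH k (MonoidAlgebra.of k Hgrp (SemidirectProduct.inl a * tH)) =
        (2 : k) • sigmaPt k) ∧
    (Submodule.span k {z : MonoidAlgebra k Hgrp | ∃ c, z = trH k c} =
        Submodule.span k {sigmaPt k} ∧
      sigmaPt k ≠ 0) := by
  have hsingle : ∀ (h : Hgrp) (v : k),
      trH k (MonoidAlgebra.single h v) ∈ Submodule.span k {sigmaPt k} := by
    intro h v
    obtain ⟨a, b⟩ := h
    rcases c2_cases b with hb | hb <;> subst hb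
    · have ha : (⟨a, 1⟩ : Hgrp) = SemidirectProduct.inl a := rfl
      rw [ha, trH_inl]
      exact zero_mem _
    · have ha : (⟨a, Multiplicative.ofAdd 1⟩ : Hgrp) = SemidirectProduct.inl a * tH :=
        SemidirectProduct.mk_eq_inl_mul_inr _ _
      rw [ha, trH_inl_t, sigma_v]
      exact add_mem (Submodule.smul_mem _ _ (Submodule.mem_span_singleton_self _))
        (Submodule.smul_mem _ _ (Submodule.mem_span_singleton_self _))
  have hall : ∀ c : MonoidAlgebra k Hgrp, trH k c ∈ Submodule.span k {sigmaPt k} := by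
    intro c
    induction c using MonoidAlgebra.induction with
    | zero => rw [trH_zero]; exact zero_mem _
    | single_add a b f _ _ ih => rw [trH_add]; exact add_mem (hsingle a b) ih
  refine ⟨?_, ?_, ?_, ?_⟩
  · intro c
    induction c using MonoidAlgebra.induction with
    | zero => rw [map_zero, trH_zero]
    | single_add a b f _ _ ih => rw [map_add, trH_add, embedP_single, trH_inl, ih, add_zero]
  · intro a
    rw [MonoidAlgebra.of_apply, trH_inl_t, sigma_v, one_smul, two_smul]
  · refine le_antisymm ?_ ?_
    · rw [Submodule.span_le]
      rintro z ⟨c, rfl⟩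
      exact hall c
    · rw [Submodule.span_le, Set.singleton_subset_iff]
      have key : sigmaPt k
          = (2 : k) • trH k (MonoidAlgebra.single (SemidirectProduct.inl (1 : Pgrp) * tH) 1) := by
        rw [trH_inl_t, sigma_v, one_smul, ← two_smul k (sigmaPt k), smul_smul]
        rw [show (2:k)*2 = 4 by norm_num, four_one k, one_smul]
      rw [key]
      exact Submodule.smul_mem _ _
        (Submodule.subset_span ⟨MonoidAlgebra.single (SemidirectProduct.inl (1 : Pgrp) * tH) 1, rfl⟩)
  · intro h
    have := sigmaPt_coeff k
    rw [h] at this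
    simp at this
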